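/- arXiv:1305.1518 — 2 statements merged into one kernel-verified Lean document; each statement's English description precedes it below -/
import Mathlib

section
/- Let 𝔤 be an algebraic Lie algebra, 𝔧 a Cartan–Duflo subalgebra of 𝔤, and g ∈ 𝔤*^𝔧 a strongly regular form on 𝔤 fixed by 𝔧 that is stable as a form on the centralizer 𝔤^𝔧. Then 𝔤(g) ∩ [𝔤, 𝔤(g)] = 𝔤(g) ∩ [𝔤^𝔧, 𝔤(g)], and hence g is stable as a form on 𝔤. -/
open Module LinearMap

namespace Paper

variable (K : Type*) [Field K]

section Basic
variable {L : Type*} [LieRing L] [LieAlgebra K L]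

/-- The coadjoint stabilizer `𝔤(g) = {X : g⁅X,·⁆ = 0}` of a linear form. -/
def stab (g : Module.Dual K L) : Submodule K L where
  carrier := {X | ∀ Y, g ⁅X, Y⁆ = 0}
  add_mem' := by intro a b ha hb; intro Y; rw [add_lie, map_add, ha Y, hb Y, add_zero]
  zero_mem' := by intro Y; rw [zero_lie, map_zero]
  smul_mem' := by intro c a ha; intro Y; rw [smul_lie, map_smul, ha Y, smul_zero]

lemma mem_stab {g : Module.Dual K L} {X : L} : X ∈ stab K g ↔ ∀ Y, g ⁅X, Y⁆ = 0 := Iff.rfl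

/-- The coadjoint stabilizer as a Lie subalgebra. -/
def stabLie (g : Module.Dual K L) : LieSubalgebra K L :=
  { stab K g with
    lie_mem' := fun {x y} hx hy => by
      intro Z
      have hx' : ∀ Y, g ⁅x, Y⁆ = 0 := hx
      have hy' : ∀ Y, g ⁅y, Y⁆ = 0 := hy
      rw [lie_lie, map_sub, hx' ⁅y, Z⁆, hy' ⁅x, Z⁆, sub_zero] }

variable (L) in
/-- The index of a Lie algebra: minimal dimension of a coadjoint stabilizer. -/
noncomputable def lieIndex : ℕ :=
  sInf (Set.range fun g : Module.Dual K L => finrank K (stab K g))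

/-- A linear form is regular if its stabilizer has minimal dimension. -/
def IsRegular (g : Module.Dual K L) : Prop := finrank K (stab K g) = lieIndex K L

/-- `[A, 𝔤(g)]` : span of brackets of elements of `A` with elements of the stabilizer. -/
def brSpanFrom (A : Set L) (g : Module.Dual K L) : Submodule K L :=
  Submodule.span K {z | ∃ x ∈ A, ∃ y ∈ stab K g, z = ⁅x, y⁆}

/-- `[𝔤, 𝔤(g)]`. -/
def brSpan (g : Module.Dual K L) : Submodule K L := brSpanFrom K Set.univ g

/-- Stability of a linear form, via the Tauvel–Yu criterion
`[𝔤,𝔤(f)] ∩ 𝔤(f) = 0` (valid for algebraic Lie algebras). -/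
def IsStableForm (g : Module.Dual K L) : Prop := brSpan K g ⊓ stab K g = ⊥

variable (L) in
/-- A Lie algebra is stable if it admits a stable linear form. -/
def IsStableAlg : Prop := ∃ g : Module.Dual K L, IsStableForm K g

end Basic

section Zariski
variable {M : Type*} [AddCommGroup M] [Module K M]

variable (M) in
/-- Polynomial functions on a (finite-dimensional) vector space: the subalgebra of
functions generated by the linear functionals. -/
def polyAlg : Subalgebra K (M → K) :=
  Algebra.adjoin K (Set.range fun φ : Module.Dual K M => (φ : M → K))

/-- Zariski-open subsets of a vector space: unions of non-vanishing loci of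
polynomial functions. -/
def IsZariskiOpen (U : Set M) : Prop :=
  ∃ S : Set (M → K), (∀ p ∈ S, p ∈ polyAlg K M) ∧ U = ⋃ p ∈ S, {x | p x ≠ 0}

end Zariski

section QuasiRed
variable (L : Type*) [LieRing L] [LieAlgebra K L]

/-- A Lie algebra is reductive if its solvable radical coincides with its centre. -/
def IsReductiveAlg : Prop := LieAlgebra.radical K L = LieAlgebra.center K L

/-- The quotient map `𝔤 → 𝔤/𝔷(𝔤)` as a morphism of Lie algebras. -/
def centerQuotMk : L →ₗ⁅K⁆ L ⧸ (LieAlgebra.center K L) :=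
  { ((LieAlgebra.center K L : LieSubmodule K L L) : Submodule K L).mkQ with
    map_lie' := rfl }

variable {L}

/-- A linear form is of reductive type if `𝔤(g)/𝔷`, viewed in `𝔤/𝔷`, is a reductive
Lie algebra whose centre consists of elements acting semisimply on `𝔤`. -/
def IsReductiveTypeForm (g : Module.Dual K L) : Prop :=
  IsReductiveAlg K ↥((stabLie K g).map (centerQuotMk K L)) ∧
    ∀ X ∈ stabLie K g, (∀ Y ∈ stabLie K g, ⁅X, Y⁆ ∈ LieAlgebra.center K L) →
      (LieAlgebra.ad K L X).IsSemisimple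

variable (L) in
/-- A Lie algebra is quasi-reductive if it admits a linear form of reductive type. -/
def QuasiReductive : Prop := ∃ g : Module.Dual K L, IsReductiveTypeForm K g

end QuasiRed

section Rank
variable {L : Type*} [LieRing L] [LieAlgebra K L]

/-- The torus (reductive factor) of the stabilizer of a regular form: the span of
its elements which act semisimply on `𝔤`. -/
def jTorus (g : Module.Dual K L) : Submodule K L :=
  Submodule.span K {X | X ∈ stab K g ∧ (LieAlgebra.ad K L X).IsSemisimple}

/-- A regular form is strongly regular when the torus of its stabilizer has maximal
dimension among regular forms. -/
def IsStronglyRegular (g : Module.Dual K L) : Prop :=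
  IsRegular K g ∧ ∀ g' : Module.Dual K L, IsRegular K g' →
    finrank K (jTorus K g') ≤ finrank K (jTorus K g)

/-- Cartan–Duflo subalgebras: the tori of stabilizers of strongly regular forms. -/
def IsCartanDuflo (j : Submodule K L) : Prop :=
  ∃ g : Module.Dual K L, IsStronglyRegular K g ∧ j = jTorus K g

variable (L) in
/-- The rank of an algebraic Lie algebra: the common dimension of its Cartan–Duflo
subalgebras. -/
noncomputable def lieRank : ℕ :=
  sSup {n | ∃ g : Module.Dual K L, IsStronglyRegular K g ∧ finrank K (jTorus K g) = n}

/-- The centralizer of a submodule, as a Lie subalgebra. -/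
def centralizerSub (j : Submodule K L) : LieSubalgebra K L where
  carrier := {X | ∀ Y ∈ j, ⁅Y, X⁆ = 0}
  add_mem' := by intro a b ha hb Y hY; rw [lie_add, ha Y hY, hb Y hY, add_zero]
  zero_mem' := by intro Y hY; rw [lie_zero]
  smul_mem' := by intro c a ha Y hY; rw [lie_smul, ha Y hY, smul_zero]
  lie_mem' := by
    intro x y hx hy Y hY
    rw [leibniz_lie, hx Y hY, hy Y hY, zero_lie, lie_zero, add_zero]

end Rank



section LinAlg

/-- Bracket on the right: `u ↦ ⁅u, z⁆` as a linear map. -/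
def rbr {L : Type*} [LieRing L] [LieAlgebra K L] (z : L) : L →ₗ[K] L where
  toFun u := ⁅u, z⁆
  map_add' a b := add_lie a b z
  map_smul' c a := smul_lie c a z


variable {V : Type*} [AddCommGroup V] [Module K V] [FiniteDimensional K V]

lemma pick_subfamily {ι : Type*} (v : ι → V) (s : ℕ)
    (hs : s ≤ finrank K (Submodule.span K (Set.range v))) :
    ∃ φ : Fin s → ι, Function.Injective φ ∧ LinearIndependent K (v ∘ φ) := by
  classical
  obtain ⟨b, hb_sub, hb_span, hb_li⟩ := exists_linearIndependent K (Set.range v)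
  have hfin : b.Finite := hb_li.setFinite
  haveI := hfin.fintype
  have hcard : finrank K (Submodule.span K b) = b.toFinset.card :=
    finrank_span_set_eq_card hb_li
  have hsc : s ≤ Fintype.card b := by
    rw [Set.toFinset_card] at hcard
    rw [← hb_span] at hs
    omega
  let emb : Fin s → b := fun i => (Fintype.equivFin b).symm (Fin.castLE hsc i)
  have hembinj : Function.Injective emb := by
    intro a a' h
    have := (Fintype.equivFin b).symm.injective h
    exact Fin.castLE_injective hsc this
  have hchoice : ∀ i : Fin s, ∃ j : ι, v j = (emb i : V) := fun i => hb_sub (emb i).2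
  choose φ hφ using hchoice
  have hvφ : v ∘ φ = fun i => ((emb i : V)) := funext fun i => hφ i
  have hli : LinearIndependent K (v ∘ φ) := by
    rw [hvφ]
    exact hb_li.comp emb hembinj
  refine ⟨φ, fun a a' h => ?_, hli⟩
  have : v (φ a) = v (φ a') := by rw [h]
  rw [hφ a, hφ a'] at this
  exact hembinj (Subtype.ext this)

open Matrix in
lemma exists_square_submatrix {n s : ℕ} (M : Matrix (Fin n) (Fin n) K) (hs : s ≤ M.rank) :
    ∃ (α β : Fin s → Fin n), Function.Injective α ∧ Function.Injective β ∧
      (M.submatrix α β).det ≠ 0 := by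
  classical
  rw [Matrix.rank_eq_finrank_span_cols] at hs
  obtain ⟨β, hβinj, hβli⟩ := pick_subfamily K (fun j => Mᵀ j) s hs
  set N : Matrix (Fin n) (Fin s) K := M.submatrix _root_.id β with hN
  have hNT : Nᵀ = (fun j => Mᵀ j) ∘ β := by
    funext j i
    rfl
  have hrankN : N.rank = s := by
    rw [Matrix.rank_eq_finrank_span_cols]
    change finrank K (Submodule.span K (Set.range ((fun j => Mᵀ j) ∘ β))) = s
    rw [finrank_span_eq_card hβli, Fintype.card_fin]
  have hrankNT : Nᵀ.rank = s := by rw [Matrix.rank_transpose]; exact hrankN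
  have hrows : s ≤ finrank K (Submodule.span K (Set.range (fun i => N i))) := by
    rw [Matrix.rank_eq_finrank_span_cols] at hrankNT
    exact hrankNT.ge
  obtain ⟨α, hαinj, hαli⟩ := pick_subfamily K (fun i => N i) s hrows
  refine ⟨α, β, hαinj, hβinj, ?_⟩
  have hrowsS : LinearIndependent K (fun i => (M.submatrix α β) i) := by
    have he : (fun i => (M.submatrix α β) i) = (fun i => N i) ∘ α := by
      funext i j; rfl
    rw [he]; exact hαli
  have hunit : IsUnit (M.submatrix α β) :=
    Matrix.linearIndependent_rows_iff_isUnit.mp hrowsS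
  exact ((Matrix.isUnit_iff_isUnit_det _).mp hunit).ne_zero

open Polynomial in
lemma fitting_single (f : Module.End K V) (hf : f.IsSemisimple) :
    ker f ⊓ range f = ⊥ ∧ ker f ⊔ range f = ⊤ := by
  have hmin : Polynomial.aeval f (minpoly K f) = 0 := minpoly.aeval K f
  have hsq : Squarefree (minpoly K f) := hf.minpoly_squarefree
  have hXf : aeval f (X : K[X]) = f := aeval_X f
  by_cases hdvd : (X : K[X]) ∣ minpoly K f
  · obtain ⟨σ, hσ⟩ := hdvd
    have hXσ : ¬ (X : K[X]) ∣ σ := by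
      rintro ⟨τ, hτ⟩
      have h2 : (X * X : K[X]) ∣ minpoly K f := ⟨τ, by rw [hσ, hτ]; ring⟩
      exact Polynomial.not_isUnit_X (hsq X h2)
    have hcop : IsCoprime (X : K[X]) σ :=
      (Polynomial.irreducible_X.coprime_iff_not_dvd).mpr hXσ
    obtain ⟨a, c, hac⟩ := hcop
    have hbot : ker f ⊓ range f = ⊥ := by
      rw [eq_bot_iff]
      rintro x ⟨hxk, y, hy⟩
      have hker : f x = 0 := LinearMap.mem_ker.mp hxk
      have hmul : (aeval f σ) * f = aeval f (minpoly K f) := by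
        rw [hσ, mul_comm X σ, map_mul, hXf]
      have hσx : (aeval f σ) x = 0 := by
        calc (aeval f σ) x = ((aeval f σ) * f) y := by rw [Module.End.mul_apply, hy]
        _ = 0 := by rw [hmul, hmin]; rfl
      have hx0 : (aeval f (a * X + c * σ)) x = x := by rw [hac]; simp
      rw [map_add, map_mul, map_mul, hXf] at hx0
      rw [LinearMap.add_apply, Module.End.mul_apply, Module.End.mul_apply, hker, hσx,
        map_zero, map_zero, add_zero] at hx0
      simpa using hx0.symm
    refine ⟨hbot, ?_⟩
    have hdim : finrank K ((ker f ⊔ range f : Submodule K V) : Submodule K V) = finrank K V := by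
      have h1 := Submodule.finrank_sup_add_finrank_inf_eq (ker f) (range f)
      have h2 := LinearMap.finrank_range_add_finrank_ker f
      rw [hbot, finrank_bot, add_zero] at h1
      omega
    exact Submodule.eq_top_of_finrank_eq hdim
  · have hcop : IsCoprime (X : K[X]) (minpoly K f) :=
      (Polynomial.irreducible_X.coprime_iff_not_dvd).mpr hdvd
    obtain ⟨a, c, hac⟩ := hcop
    have h1 : aeval f a * f = 1 := by
      have : (aeval f (a * X + c * minpoly K f)) = 1 := by rw [hac, map_one]
      rw [map_add, map_mul, map_mul, hXf, hmin, mul_zero, add_zero] at this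
      exact this
    have h2 : f * aeval f a = 1 := by
      have hca : aeval f (X * a) = aeval f (a * X) := by rw [mul_comm]
      rw [map_mul, map_mul, hXf] at hca
      rw [hca, h1]
    have hker : ker f = ⊥ := by
      rw [eq_bot_iff]
      intro x hx
      have hx0 : f x = 0 := LinearMap.mem_ker.mp hx
      have : (aeval f a * f) x = x := by rw [h1]; rfl
      rw [Module.End.mul_apply, hx0, map_zero] at this
      simpa using this.symm
    have hrange : range f = ⊤ := by
      rw [eq_top_iff]
      intro x _
      refine ⟨(aeval f a) x, ?_⟩
      have : (f * aeval f a) x = x := by rw [h2]; rfl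
      rwa [Module.End.mul_apply] at this
    rw [hker, hrange]
    simp

lemma fitting_rel (f : Module.End K V) (hf : f.IsSemisimple) (W : Submodule K V)
    (hW : W.map f ≤ W) :
    (W ⊓ ker f) ⊓ W.map f = ⊥ ∧ (W ⊓ ker f) ⊔ W.map f = W := by
  have hp : W ∈ f.invtSubmodule :=
    (Module.End.mem_invtSubmodule f).mpr (Submodule.map_le_iff_le_comap.mp hW)
  obtain ⟨h1, h2⟩ := fitting_single K (f.restrict hp) (hf.restrict hp)
  have hker : (ker (f.restrict hp)).map W.subtype = W ⊓ ker f := by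
    ext x
    simp only [Submodule.mem_map, mem_ker, Submodule.mem_inf]
    constructor
    · rintro ⟨⟨y, hyW⟩, hy0, rfl⟩
      refine ⟨hyW, ?_⟩
      have : (f.restrict hp ⟨y, hyW⟩ : V) = 0 := by rw [hy0]; rfl
      exact this
    · rintro ⟨hxW, hx0⟩
      refine ⟨⟨x, hxW⟩, ?_, rfl⟩
      apply Subtype.ext
      exact hx0
  have hrange : (range (f.restrict hp)).map W.subtype = W.map f := by
    ext x
    simp only [Submodule.mem_map, mem_range]
    constructor
    · rintro ⟨z, ⟨y, hy⟩, rfl⟩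
      refine ⟨(y : V), y.2, ?_⟩
      have := congrArg (W.subtype) hy
      exact this
    · rintro ⟨y, hyW, rfl⟩
      exact ⟨⟨f y, hW ⟨y, hyW, rfl⟩⟩,
        ⟨⟨y, hyW⟩, by apply Subtype.ext; rfl⟩, rfl⟩
  constructor
  · rw [← hker, ← hrange, ← Submodule.map_inf _ W.injective_subtype, h1, Submodule.map_bot]
  · rw [← hker, ← hrange, ← Submodule.map_sup, h2, Submodule.map_top, Submodule.range_subtype]

lemma fitting_finset (T : Finset (Module.End K V)) :
    ∀ W : Submodule K V, (∀ f ∈ T, f.IsSemisimple) →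
      (∀ f ∈ T, ∀ g ∈ T, Commute f g) → (∀ f ∈ T, W.map f ≤ W) →
      (W ⊓ T.inf fun f => ker f) ⊓ (T.sup fun f => W.map f) = ⊥ ∧
      (W ⊓ T.inf fun f => ker f) ⊔ (T.sup fun f => W.map f) = W := by
  classical
  induction T using Finset.induction_on with
  | empty => intro W _ _ _; simp
  | @insert f T' hfT' ih =>
    intro W hss hcomm hinv
    have hfss : f.IsSemisimple := hss f (Finset.mem_insert_self f T')
    have hfinv : W.map f ≤ W := hinv f (Finset.mem_insert_self f T')
    obtain ⟨hs1, hs2⟩ := fitting_rel K f hfss W hfinv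
    set W' := W ⊓ ker f with hW'
    have hkercomm : ∀ g ∈ T', (ker f).map g ≤ ker f := by
      intro g hg
      rintro x ⟨y, hy, rfl⟩
      have hcfg : Commute f g :=
        hcomm f (Finset.mem_insert_self f T') g (Finset.mem_insert_of_mem hg)
      have hfg : f (g y) = g (f y) := by
        have := congrArg (fun u => u y) hcfg.eq
        simpa [Module.End.mul_apply] using this
      simp only [mem_ker] at hy ⊢
      rw [hfg, hy, map_zero]
    have hinv' : ∀ g ∈ T', W'.map g ≤ W' := by
      intro g hg
      refine le_inf ?_ ?_
      · exact (Submodule.map_mono inf_le_left).trans (hinv g (Finset.mem_insert_of_mem hg))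
      · exact (Submodule.map_mono inf_le_right).trans (hkercomm g hg)
    have hss' : ∀ g ∈ T', Module.End.IsSemisimple g := fun g hg =>
      hss g (Finset.mem_insert_of_mem hg)
    have hcomm' : ∀ g ∈ T', ∀ g' ∈ T', Commute g g' := fun g hg g' hg' =>
      hcomm g (Finset.mem_insert_of_mem hg) g' (Finset.mem_insert_of_mem hg')
    obtain ⟨ih1, ih2⟩ := ih W' hss' hcomm' hinv'
    have hsupkey : (T'.sup fun g => W.map g) ⊔ W.map f
        = (T'.sup fun g => W'.map g) ⊔ W.map f := by
      apply le_antisymm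
      · refine sup_le ?_ le_sup_right
        refine Finset.sup_le fun g hg => ?_
        have hWg : W.map g = W'.map g ⊔ (W.map f).map g := by
          conv_lhs => rw [← hs2]
          rw [Submodule.map_sup]
        rw [hWg]
        refine sup_le ?_ ?_
        · exact le_sup_of_le_left (Finset.le_sup (f := fun g => W'.map g) hg)
        · have hcfg : Commute f g :=
            hcomm f (Finset.mem_insert_self f T') g (Finset.mem_insert_of_mem hg)
          have hmapcomm : (W.map f).map g = (W.map g).map f := by
            rw [← Submodule.map_comp, ← Submodule.map_comp]
            rw [show (g : Module.End K V).comp f = g * f from rfl,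
              show (f : Module.End K V).comp g = f * g from rfl, hcfg.eq]
          rw [hmapcomm]
          exact le_sup_of_le_right
            (Submodule.map_mono (hinv g (Finset.mem_insert_of_mem hg)))
      · refine sup_le ?_ le_sup_right
        refine Finset.sup_le fun g hg => ?_
        exact le_sup_of_le_left ((Submodule.map_mono inf_le_left).trans
          (Finset.le_sup (f := fun g => W.map g) hg))
    have hinfins : (insert f T').inf (fun g => (ker g : Submodule K V))
        = ker f ⊓ T'.inf fun g => ker g := Finset.inf_insert
    have hsupins : (insert f T').sup (fun g => W.map g)
        = W.map f ⊔ T'.sup fun g => W.map g := Finset.sup_insert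
    have hWassoc : W ⊓ (ker f ⊓ T'.inf fun g => ker g) = W' ⊓ T'.inf fun g => ker g := by
      rw [hW', inf_assoc]
    set D := T'.sup fun g => W'.map g with hD
    have hDW' : D ≤ W' := Finset.sup_le fun g hg => hinv' g hg
    have hsup2 : W.map f ⊔ (T'.sup fun g => W.map g) = W.map f ⊔ D := by
      rw [sup_comm, hsupkey, sup_comm]
    constructor
    · rw [hinfins, hsupins, hWassoc, hsup2, eq_bot_iff]
      rintro x ⟨hxA, hxS⟩
      obtain ⟨a, ha, d, hd, rfl⟩ := Submodule.mem_sup.mp hxS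
      have hadker : a + d ∈ ker f :=
        ((inf_le_left.trans inf_le_right) : W' ⊓ (T'.inf fun g => ker g) ≤ ker f) hxA
      have hdker : d ∈ ker f := (hDW'.trans inf_le_right) hd
      have haker : a ∈ ker f := by
        have h3 : f (a + d) = 0 := hadker
        rw [map_add, show f d = 0 from hdker, add_zero] at h3
        exact h3
      have ha0 : a = 0 := by
        have h4 : a ∈ (W ⊓ ker f) ⊓ W.map f :=
          ⟨⟨hfinv ha, haker⟩, ha⟩
        rw [← hW'] at h4
        rwa [hs1, Submodule.mem_bot] at h4
      rw [ha0, zero_add] at hxA ⊢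
      have h5 : d ∈ (W' ⊓ T'.inf fun g => ker g) ⊓ D := ⟨hxA, hd⟩
      rwa [ih1, Submodule.mem_bot] at h5
    · rw [hinfins, hsupins, hWassoc, hsup2, ← sup_assoc,
        sup_comm (W' ⊓ T'.inf fun g => ker g) (W.map f), sup_assoc, ih2, sup_comm, hs2]

end LinAlg

section DV
open scoped Matrix

variable {L : Type*} [LieRing L] [LieAlgebra K L] [FiniteDimensional K L]

open Polynomial in
/-- Duflo–Vergne: the stabilizer of a regular linear form is abelian. -/
lemma stab_comm [Infinite K] {g : Module.Dual K L} (hreg : IsRegular K g) {x y : L}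
    (hx : x ∈ stab K g) (hy : y ∈ stab K g) : ⁅x, y⁆ = 0 := by
  classical
  set n := finrank K L with hn
  set b : Basis (Fin n) K L := Module.finBasis K L with hbdef
  set Mat : Module.Dual K L → Matrix (Fin n) (Fin n) K := fun f i j => f ⁅b j, b i⁆ with hMat
  have key0 : ∀ (f : Module.Dual K L) (v : Fin n → K) (i : Fin n),
      (Mat f *ᵥ v) i = f ⁅b.equivFun.symm v, b i⁆ := by
    intro f v i
    have h1 : f ⁅b.equivFun.symm v, b i⁆ = (f ∘ₗ rbr K (b i)) (∑ j, v j • b j) := by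
      rw [Basis.equivFun_symm_apply]; rfl
    rw [h1, map_sum]
    show ∑ j, Mat f i j * v j = ∑ j, (f ∘ₗ rbr K (b i)) (v j • b j)
    refine Finset.sum_congr rfl fun j _ => ?_
    rw [map_smul, smul_eq_mul, mul_comm]
    rfl
  have key1 : ∀ f : Module.Dual K L,
      Submodule.map (b.equivFun : L →ₗ[K] (Fin n → K)) (stab K f)
        = LinearMap.ker (Mat f).mulVecLin := by
    intro f
    ext v
    rw [Submodule.mem_map, LinearMap.mem_ker, Matrix.mulVecLin_apply]
    constructor
    · rintro ⟨z, hz, rfl⟩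
      funext i
      have h2 : b.equivFun.symm (b.equivFun z) = z := b.equivFun.symm_apply_apply z
      rw [show ((b.equivFun : L →ₗ[K] (Fin n → K)) z : Fin n → K) = b.equivFun z from rfl,
        key0 f (b.equivFun z) i, h2]
      exact hz (b i)
    · intro hv
      refine ⟨b.equivFun.symm v, ?_, b.equivFun.apply_symm_apply v⟩
      intro Y
      have hbasis : ∀ i, f ⁅b.equivFun.symm v, b i⁆ = 0 := by
        intro i
        rw [← key0 f v i, hv]
        rfl
      have hψ : (f ∘ₗ ((LieAlgebra.ad K L) (b.equivFun.symm v) : Module.End K L))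
          = (0 : L →ₗ[K] K) := by
        apply b.ext
        intro i
        exact hbasis i
      have := congrArg (fun φ : L →ₗ[K] K => φ Y) hψ
      exact this
  have key2 : ∀ f : Module.Dual K L,
      finrank K (stab K g) ≤ finrank K (LinearMap.ker (Mat f).mulVecLin) := by
    intro f
    have h1 : finrank K (LinearMap.ker (Mat f).mulVecLin) = finrank K (stab K f) := by
      rw [← key1 f]
      exact LinearEquiv.finrank_map_eq _ _
    have hreg' : finrank K (stab K g) = lieIndex K L := hreg
    rw [h1, hreg']
    exact Nat.sInf_le ⟨f, rfl⟩
  set r := finrank K (stab K g) with hr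
  have hrn : r ≤ n := Submodule.finrank_le _
  have hkerg : finrank K (LinearMap.ker (Mat g).mulVecLin) = r := by
    rw [← key1 g, LinearEquiv.finrank_map_eq]
  have hpi : finrank K (Fin n → K) = n := by
    rw [Module.finrank_fin_fun]
  have hrank : (Mat g).rank = n - r := by
    have h1 := LinearMap.finrank_range_add_finrank_ker ((Mat g).mulVecLin)
    rw [hkerg, hpi] at h1
    show finrank K (LinearMap.range (Mat g).mulVecLin) = n - r
    omega
  set m := n - r with hm
  obtain ⟨α, β, hαinj, hβinj, hdet0⟩ := exists_square_submatrix K (Mat g) hrank.ge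
  suffices hsuff : ∀ h : Module.Dual K L, h ⁅x, y⁆ = 0 by
    exact (Module.forall_dual_apply_eq_zero_iff K ⁅x,y⁆).mp hsuff
  intro h
  -- complement of the column set
  set sβ : Finset (Fin n) := Finset.univ \ Finset.image β Finset.univ with hsβ
  have hcardim : (Finset.image β Finset.univ).card = m := by
    rw [Finset.card_image_of_injective _ hβinj, Finset.card_univ, Fintype.card_fin]
  have hcard : sβ.card = r := by
    rw [hsβ, Finset.card_sdiff_of_subset (Finset.subset_univ _), Finset.card_univ, Fintype.card_fin,
      hcardim]
    omega
  set γf : Fin r → Fin n := fun k => sβ.orderEmbOfFin hcard k with hγf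
  have hγmem : ∀ k, γf k ∈ sβ := fun k => Finset.orderEmbOfFin_mem sβ hcard k
  have hγinj : Function.Injective γf := fun a a' haa =>
    (sβ.orderEmbOfFin hcard).injective haa
  have hβγ : ∀ i k, β i ≠ γf k := by
    intro i k he
    have h1 := hγmem k
    rw [Finset.mem_sdiff] at h1
    exact h1.2 (he ▸ Finset.mem_image_of_mem β (Finset.mem_univ i))
  have hbij : Function.Bijective (Sum.elim β γf) := by
    rw [Fintype.bijective_iff_injective_and_card]
    constructor
    · rintro (i | k) (i' | k') hpq
      · exact congrArg Sum.inl (hβinj hpq)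
      · exact absurd hpq (hβγ i k')
      · exact absurd hpq.symm (hβγ i' k)
      · exact congrArg Sum.inr (hγinj hpq)
    · simp only [Fintype.card_sum, Fintype.card_fin]
      omega
  set e : Fin m ⊕ Fin r ≃ Fin n := Equiv.ofBijective _ hbij with he
  have hsymm_inl : ∀ i, e.symm (β i) = Sum.inl i := by
    intro i
    rw [Equiv.symm_apply_eq]
    rfl
  have hsymm_inr : ∀ k, e.symm (γf k) = Sum.inr k := by
    intro k
    rw [Equiv.symm_apply_eq]
    rfl
  have hsplit : ∀ (F : Fin n → K), (∑ j, F j) = (∑ i, F (β i)) + ∑ k, F (γf k) := by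
    intro F
    rw [← Equiv.sum_comp e F, Fintype.sum_sum_type]
    rfl
  have hrow : ∀ (MM : Matrix (Fin n) (Fin n) K) (w : Fin n → K) (i : Fin m),
      (MM *ᵥ w) (α i) = ((MM.submatrix α β) *ᵥ (w ∘ β)) i
        + ((MM.submatrix α γf) *ᵥ (w ∘ γf)) i := by
    intro MM w i
    show ∑ j, MM (α i) j * w j = (∑ i', MM (α i) (β i') * w (β i'))
      + ∑ k, MM (α i) (γf k) * w (γf k)
    exact hsplit (fun j => MM (α i) j * w j)
  -- polynomial data
  set NP : Matrix (Fin n) (Fin n) K[X] :=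
    fun i j => C (Mat g i j) + X * C (Mat h i j) with hNP
  set Q : K[X] := (NP.submatrix α β).det with hQ
  set ξ : Fin n → K := b.equivFun x with hξ
  set v : Fin r → K := ξ ∘ γf with hv
  set U : Fin m → K[X] :=
    -(((NP.submatrix α β).adjugate * NP.submatrix α γf) *ᵥ fun k => C (v k)) with hU
  set P : Fin n → K[X] := fun j => Sum.elim U (fun k => Q * C (v k)) (e.symm j) with hP
  have hPβ : ∀ i, P (β i) = U i := by
    intro i
    rw [hP]
    show Sum.elim U _ (e.symm (β i)) = U i
    rw [hsymm_inl i]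
    rfl
  have hPγ : ∀ k, P (γf k) = Q * C (v k) := by
    intro k
    rw [hP]
    show Sum.elim U _ (e.symm (γf k)) = _
    rw [hsymm_inr k]
    rfl
  set MT : K → Matrix (Fin n) (Fin n) K := fun t i j => Mat g i j + t * Mat h i j with hMTdef
  have hMT : ∀ t : K, MT t = Mat (g + t • h) := by
    intro t
    funext i j
    show Mat g i j + t * Mat h i j = (g + t • h) ⁅b j, b i⁆
    rw [hMat]
    simp only [LinearMap.add_apply, LinearMap.smul_apply, smul_eq_mul]
  have hMT0 : MT 0 = Mat g := by
    funext i j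
    simp [hMTdef]
  have heval : ∀ (t : K) (i : Fin n) (j : Fin n), eval t (NP i j) = MT t i j := by
    intro t i j
    show eval t (NP i j) = Mat g i j + t * Mat h i j
    rw [hNP]
    show eval t (C (Mat g i j) + X * C (Mat h i j)) = _
    rw [eval_add, eval_mul, eval_X, eval_C, eval_C]
  have hmapβ : ∀ t : K, (NP.submatrix α β).map (eval t) = (MT t).submatrix α β := by
    intro t
    funext i j
    simp only [Matrix.map_apply, Matrix.submatrix_apply]
    exact heval t _ _
  have hmapγ : ∀ t : K, (NP.submatrix α γf).map (eval t) = (MT t).submatrix α γf := by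
    intro t
    funext i j
    simp only [Matrix.map_apply, Matrix.submatrix_apply]
    exact heval t _ _
  have hQdet : ∀ t : K, eval t Q = ((MT t).submatrix α β).det := by
    intro t
    have h1 := RingHom.map_det (evalRingHom t) (NP.submatrix α β)
    have h2 : (evalRingHom t).mapMatrix (NP.submatrix α β) = (MT t).submatrix α β := by
      have : (evalRingHom t).mapMatrix (NP.submatrix α β)
          = (NP.submatrix α β).map (eval t) := rfl
      rw [this, hmapβ t]
    rw [h2] at h1
    exact h1
  have hmapadj : ∀ t : K, (NP.submatrix α β).adjugate.map (eval t)
      = ((MT t).submatrix α β).adjugate := by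
    intro t
    have h1 := RingHom.map_adjugate (evalRingHom t) (NP.submatrix α β)
    have h2 : (evalRingHom t).mapMatrix (NP.submatrix α β).adjugate
        = (NP.submatrix α β).adjugate.map (eval t) := rfl
    rw [h2] at h1
    rw [h1]
    congr 1
    have h3 : (evalRingHom t).mapMatrix (NP.submatrix α β)
        = (NP.submatrix α β).map (eval t) := rfl
    rw [h3, hmapβ t]
  have hQ0 : eval 0 Q ≠ 0 := by
    rw [hQdet 0, hMT0]
    exact hdet0
  -- the core claim, for every good parameter t
  have hcore : ∀ t : K, eval t Q ≠ 0 →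
      ∃ w : Fin n → K, (MT t) *ᵥ w = 0 ∧ w ∘ γf = v ∧
        ((fun j => eval t (P j)) = fun j => eval t Q * w j) ∧
        (∀ w' : Fin n → K, (MT t) *ᵥ w' = 0 → w' ∘ γf = v → w' = w) := by
    intro t hq
    set A := (MT t).submatrix α β with hA
    set Bm := (MT t).submatrix α γf with hB
    have hAdet : A.det = eval t Q := (hQdet t).symm
    have hAunit : IsUnit A :=
      (Matrix.isUnit_iff_isUnit_det A).mpr (isUnit_iff_ne_zero.mpr (by rw [hAdet]; exact hq))
    have hmulinj : Function.Injective (A.mulVec) :=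
      Matrix.mulVec_injective_iff_isUnit.mpr hAunit
    have hinj0 : ∀ w : Fin n → K, MT t *ᵥ w = 0 → w ∘ γf = 0 → w = 0 := by
      intro w hw hwγ
      have hrow0 : A *ᵥ (w ∘ β) = 0 := by
        funext i
        have h1 := hrow (MT t) w i
        rw [congrFun hw (α i), hwγ, Matrix.mulVec_zero] at h1
        have h2 : (0:K) = (A *ᵥ (w ∘ β)) i + 0 := h1
        rw [add_zero] at h2
        exact h2.symm
      have hwβ : w ∘ β = 0 := by
        apply hmulinj
        rw [hrow0, Matrix.mulVec_zero]
      funext j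
      obtain ⟨p, rfl⟩ := e.surjective j
      cases p with
      | inl i => exact congrFun hwβ i
      | inr k => exact congrFun hwγ k
    have hker_ge : r ≤ finrank K (LinearMap.ker (MT t).mulVecLin) := by
      rw [hMT t]
      exact key2 (g + t • h)
    set ρ : LinearMap.ker (MT t).mulVecLin →ₗ[K] (Fin r → K) :=
      (LinearMap.funLeft K K γf).comp (LinearMap.ker (MT t).mulVecLin).subtype with hρ
    have hρker : LinearMap.ker ρ = ⊥ := by
      rw [eq_bot_iff]
      rintro ⟨w, hwker⟩ hwρ
      have hw0 : MT t *ᵥ w = 0 := by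
        have := hwker
        rwa [LinearMap.mem_ker, Matrix.mulVecLin_apply] at this
      have hγ0 : w ∘ γf = 0 := hwρ
      have hzero := hinj0 w hw0 hγ0
      show (⟨w, hwker⟩ : LinearMap.ker (MT t).mulVecLin) ∈ (⊥ : Submodule K _)
      rw [Submodule.mem_bot]
      exact Subtype.ext hzero
    have hρinj : Function.Injective ρ := LinearMap.ker_eq_bot.mp hρker
    have hker_le : finrank K (LinearMap.ker (MT t).mulVecLin) ≤ r := by
      have h1 := LinearMap.finrank_le_finrank_of_injective hρinj
      rwa [Module.finrank_fin_fun] at h1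
    have hρsurj : Function.Surjective ρ := by
      have h1 := LinearMap.finrank_range_add_finrank_ker ρ
      rw [hρker, finrank_bot, add_zero] at h1
      have h2 : finrank K (LinearMap.range ρ) = r := by omega
      have h3 : LinearMap.range ρ = ⊤ :=
        Submodule.eq_top_of_finrank_eq (by rw [h2, Module.finrank_fin_fun])
      exact LinearMap.range_eq_top.mp h3
    obtain ⟨w', hw'⟩ := hρsurj v
    set w : Fin n → K := (w' : Fin n → K) with hw
    have hwker : MT t *ᵥ w = 0 := by
      have := w'.2
      rwa [LinearMap.mem_ker, Matrix.mulVecLin_apply] at this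
    have hwγ : w ∘ γf = v := hw'
    have huniq : ∀ w'' : Fin n → K, MT t *ᵥ w'' = 0 → w'' ∘ γf = v → w'' = w := by
      intro w'' hw'' hw''γ
      have h1 : MT t *ᵥ (w'' - w) = 0 := by
        rw [Matrix.mulVec_sub, hw'', hwker, sub_zero]
      have h2 : (w'' - w) ∘ γf = 0 := by
        funext k
        show w'' (γf k) - w (γf k) = 0
        rw [show w'' (γf k) = v k from congrFun hw''γ k,
          show w (γf k) = v k from congrFun hwγ k, sub_self]
      have := hinj0 _ h1 h2
      exact sub_eq_zero.mp this
    refine ⟨w, hwker, hwγ, ?_, huniq⟩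
    have hrowid : A *ᵥ (w ∘ β) + Bm *ᵥ v = 0 := by
      funext i
      have h1 := hrow (MT t) w i
      rw [congrFun hwker (α i), hwγ] at h1
      show (A *ᵥ (w ∘ β)) i + (Bm *ᵥ v) i = 0
      exact h1.symm
    have hschur : A.det • (w ∘ β) = -((A.adjugate * Bm) *ᵥ v) := by
      have h2 : A.adjugate *ᵥ (A *ᵥ (w ∘ β)) = A.det • (w ∘ β) := by
        rw [Matrix.mulVec_mulVec, Matrix.adjugate_mul, Matrix.smul_mulVec,
          Matrix.one_mulVec]
      have h3 : A *ᵥ (w ∘ β) = -(Bm *ᵥ v) := eq_neg_of_add_eq_zero_left hrowid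
      rw [h3, Matrix.mulVec_neg, Matrix.mulVec_mulVec] at h2
      rw [← h2]
    have hprodmap : ((NP.submatrix α β).adjugate * NP.submatrix α γf).map (eval t)
        = A.adjugate * Bm := by
      have h1 : ((NP.submatrix α β).adjugate * NP.submatrix α γf).map (eval t)
          = (NP.submatrix α β).adjugate.map (eval t) * (NP.submatrix α γf).map (eval t) :=
        Matrix.map_mul (f := evalRingHom t)
      rw [h1, hmapadj t, hmapγ t, hA, hB]
    have hUeval : ∀ i, eval t (U i) = -(((A.adjugate * Bm) *ᵥ v) i) := by
      intro i
      rw [hU]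
      show eval t ((-(((NP.submatrix α β).adjugate * NP.submatrix α γf) *ᵥ
        fun k => C (v k))) i) = _
      rw [Pi.neg_apply, eval_neg]
      congr 1
      show eval t (∑ k, ((NP.submatrix α β).adjugate * NP.submatrix α γf) i k * C (v k))
        = ∑ k, (A.adjugate * Bm) i k * v k
      rw [Polynomial.eval_finset_sum]
      refine Finset.sum_congr rfl fun k _ => ?_
      rw [eval_mul, eval_C]
      congr 1
      have := congrFun (congrFun hprodmap i) k
      exact this
    funext j
    obtain ⟨p, rfl⟩ := e.surjective j
    cases p with
    | inl i =>
      have hej : e (Sum.inl i) = β i := rfl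
      rw [hej, hPβ i, hUeval i]
      have h4 := congrFun hschur i
      rw [Pi.smul_apply, smul_eq_mul, hAdet, Pi.neg_apply] at h4
      rw [← h4]
      rfl
    | inr k =>
      have hej : e (Sum.inr k) = γf k := rfl
      rw [hej, hPγ k, eval_mul, eval_C]
      congr 1
      exact (congrFun hwγ k).symm
  -- main polynomial identity
  have hmain : NP *ᵥ P = 0 := by
    funext i
    rw [Pi.zero_apply]
    apply Polynomial.eq_zero_of_infinite_isRoot
    have hQne : Q ≠ 0 := by
      intro h0
      exact hQ0 (by rw [h0]; simp)
    have hfinroots : {t : K | Q.IsRoot t}.Finite := Polynomial.finite_setOf_isRoot hQne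
    have hinf : {t : K | Q.IsRoot t}ᶜ.Infinite := hfinroots.infinite_compl
    apply Set.Infinite.mono ?_ hinf
    intro t ht
    have hq : eval t Q ≠ 0 := ht
    obtain ⟨w, hw, hwγ, hform, -⟩ := hcore t hq
    show ((NP *ᵥ P) i).IsRoot t
    show eval t ((NP *ᵥ P) i) = 0
    have h1 : eval t ((NP *ᵥ P) i) = ((MT t) *ᵥ (fun j => eval t (P j))) i := by
      show eval t (∑ j, NP i j * P j) = ∑ j, MT t i j * eval t (P j)
      rw [Polynomial.eval_finset_sum]
      exact Finset.sum_congr rfl fun j _ => by rw [eval_mul, heval]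
    rw [h1, hform]
    have h2 : (fun j => eval t Q * w j) = eval t Q • w := by
      funext j
      simp
    rw [h2, Matrix.mulVec_smul, hw]
    simp
  -- extract coefficients 0 and 1
  have hc0 : (fun j => (P j).coeff 0) = fun j => eval 0 Q * ξ j := by
    obtain ⟨w, hw, hwγ, hform, huniq⟩ := hcore 0 hQ0
    have hξker : MT 0 *ᵥ ξ = 0 := by
      rw [hMT0]
      have hmem : ξ ∈ LinearMap.ker (Mat g).mulVecLin := by
        rw [← key1 g]
        exact ⟨x, hx, rfl⟩
      rwa [LinearMap.mem_ker, Matrix.mulVecLin_apply] at hmem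
    have hwξ : ξ = w := huniq ξ hξker rfl
    funext j
    rw [Polynomial.coeff_zero_eq_eval_zero, congrFun hform j, ← hwξ]
  have hcoef : ∀ i : Fin n,
      (Mat g *ᵥ fun j => (P j).coeff 1) i + (Mat h *ᵥ fun j => (P j).coeff 0) i = 0 := by
    intro i
    have h1 := congrFun hmain i
    have h2 : ((NP *ᵥ P) i).coeff 1 = 0 := by rw [h1]; simp
    have h25 : (NP *ᵥ P) i = ∑ j, NP i j * P j := rfl
    rw [h25, Polynomial.finset_sum_coeff] at h2
    have h3 : ∀ j, (NP i j * P j).coeff 1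
        = Mat g i j * (P j).coeff 1 + Mat h i j * (P j).coeff 0 := by
      intro j
      have h31 : NP i j = C (Mat g i j) + X * C (Mat h i j) := rfl
      rw [h31, add_mul, Polynomial.coeff_add, Polynomial.coeff_C_mul]
      congr 1
      rw [mul_assoc]
      rw [show (1:ℕ) = 0 + 1 from rfl, Polynomial.coeff_X_mul, Polynomial.coeff_C_mul]
    have h4 : ∑ j, (Mat g i j * (P j).coeff 1 + Mat h i j * (P j).coeff 0) = 0 := by
      rw [← h2]
      exact Finset.sum_congr rfl fun j _ => (h3 j).symm
    show (∑ j, Mat g i j * (P j).coeff 1) + ∑ j, Mat h i j * (P j).coeff 0 = 0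
    rw [← Finset.sum_add_distrib]
    exact h4
  -- conclude
  set c1 : Fin n → K := fun j => (P j).coeff 1 with hc1
  have hfin1 : ∀ i, g ⁅b.equivFun.symm c1, b i⁆ + eval 0 Q * h ⁅x, b i⁆ = 0 := by
    intro i
    have h1 := hcoef i
    rw [hc0] at h1
    rw [key0 g c1 i] at h1
    have h2 : (Mat h *ᵥ fun j => eval 0 Q * ξ j) i = eval 0 Q * (Mat h *ᵥ ξ) i := by
      show ∑ j, Mat h i j * (eval 0 Q * ξ j) = eval 0 Q * ∑ j, Mat h i j * ξ j
      rw [Finset.mul_sum]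
      exact Finset.sum_congr rfl fun j _ => by ring
    rw [h2, key0 h ξ i] at h1
    rw [show b.equivFun.symm ξ = x from b.equivFun.symm_apply_apply x] at h1
    exact h1
  have hψ : (g ∘ₗ ((LieAlgebra.ad K L) (b.equivFun.symm c1) : Module.End K L))
      + eval 0 Q • (h ∘ₗ ((LieAlgebra.ad K L) x : Module.End K L)) = 0 := by
    apply b.ext
    intro i
    show g ⁅b.equivFun.symm c1, b i⁆ + eval 0 Q • (h ⁅x, b i⁆) = 0
    rw [smul_eq_mul]
    exact hfin1 i
  have happ := congrArg (fun φ : L →ₗ[K] K => φ y) hψ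
  simp only [LinearMap.add_apply, LinearMap.coe_comp, Function.comp_apply,
    LinearMap.smul_apply, LieAlgebra.ad_apply, LinearMap.zero_apply, smul_eq_mul] at happ
  have hy' : g ⁅b.equivFun.symm c1, y⁆ = 0 := by
    rw [← lie_skew, map_neg, hy (b.equivFun.symm c1), neg_zero]
  rw [hy', zero_add] at happ
  exact (mul_eq_zero.mp happ).resolve_left hQ0

end DV


section Stmt5
variable (K : Type*) [Field K] [IsAlgClosed K] [CharZero K]
variable {L : Type*} [LieRing L] [LieAlgebra K L] [FiniteDimensional K L]

/-- if `g` is a strongly regular, `𝔧`-fixed form whose restriction to the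
centralizer `𝔤^𝔧` is stable, then
`𝔤(g) ∩ [𝔤,𝔤(g)] = 𝔤(g) ∩ [𝔤^𝔧,𝔤(g)]`, and hence `g` is stable as a form on `𝔤`. -/
theorem stable_of_centralizer_stable (j : Submodule K L) (hj : IsCartanDuflo K j)
    (g : Module.Dual K L) (hsr : IsStronglyRegular K g)
    (hfix : ∀ Y ∈ j, ∀ X : L, g ⁅Y, X⁆ = 0)
    (hstab : IsStableForm K ((g ∘ₗ (centralizerSub K j).toSubmodule.subtype : Module.Dual K ↥(centralizerSub K j)))) :
    stab K g ⊓ brSpan K g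
        = stab K g ⊓ brSpanFrom K ((centralizerSub K j : Set L)) g ∧
      IsStableForm K g := by
  classical
  obtain ⟨g₀, hsr₀, hjdef⟩ := hj
  set S : Set L := {X | X ∈ stab K g₀ ∧ (LieAlgebra.ad K L X).IsSemisimple} with hS
  have hjspan : j = Submodule.span K S := hjdef
  have hjg : ∀ z ∈ j, z ∈ stab K g := by
    intro z hz Y
    exact hfix z hz Y
  have DV : ∀ x ∈ stab K g, ∀ y ∈ stab K g, ⁅x, y⁆ = 0 := by
    intro x hxs y hys
    exact stab_comm K hsr.1 hxs hys
  obtain ⟨bset, hbS, hbspan, hbli⟩ := exists_linearIndependent K S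
  have hbfin : bset.Finite := hbli.setFinite
  set T : Finset L := hbfin.toFinset with hT
  have hmemT : ∀ s, s ∈ T ↔ s ∈ bset := fun s => Set.Finite.mem_toFinset hbfin
  have hspanT : Submodule.span K bset = j := by rw [hbspan, ← hjspan]
  have hTj : ∀ s ∈ T, s ∈ j := by
    intro s hs
    rw [← hspanT]
    exact Submodule.subset_span ((hmemT s).mp hs)
  have hTstab : ∀ s ∈ T, s ∈ stab K g := fun s hs => hjg s (hTj s hs)
  have hTS : ∀ s ∈ T, s ∈ S := fun s hs => hbS ((hmemT s).mp hs)
  set TE : Finset (Module.End K L) :=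
    T.image (fun s => ((LieAlgebra.ad K L) s : Module.End K L)) with hTE
  have hTEmem : ∀ f ∈ TE, ∃ s ∈ T, ((LieAlgebra.ad K L) s : Module.End K L) = f := by
    intro f hf
    rwa [hTE, Finset.mem_image] at hf
  have hss : ∀ f ∈ TE, f.IsSemisimple := by
    intro f hf
    obtain ⟨s, hs, rfl⟩ := hTEmem f hf
    exact (hTS s hs).2
  have hcomm : ∀ f ∈ TE, ∀ f' ∈ TE, Commute f f' := by
    intro f hf f' hf'
    obtain ⟨s, hs, rfl⟩ := hTEmem f hf
    obtain ⟨s', hs', rfl⟩ := hTEmem f' hf'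
    have h0 : ⁅s, s'⁆ = 0 := DV s (hTstab s hs) s' (hTstab s' hs')
    have h1 : (LieAlgebra.ad K L) ⁅s, s'⁆ = 0 := by rw [h0, map_zero]
    have h2 : ((LieAlgebra.ad K L) s) * ((LieAlgebra.ad K L) s')
        - ((LieAlgebra.ad K L) s') * ((LieAlgebra.ad K L) s) = 0 := by
      ext w
      have h3 : ⁅⁅s, s'⁆, w⁆ = 0 := by rw [h0, zero_lie]
      rw [lie_lie] at h3
      exact h3
    exact sub_eq_zero.mp h2
  obtain ⟨hbot, htop⟩ := fitting_finset K TE ⊤ hss hcomm (fun f _ => le_top)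
  rw [top_inf_eq] at hbot htop
  set CC : Submodule K L := TE.inf (fun f => LinearMap.ker f) with hCC
  set II : Submodule K L := TE.sup (fun f => (⊤ : Submodule K L).map f) with hII
  have hC : (centralizerSub K j).toSubmodule = CC := by
    ext X
    rw [hCC, Submodule.mem_finsetInf]
    constructor
    · intro hX f hf
      have hX' : ∀ Y ∈ j, ⁅Y, X⁆ = 0 := hX
      obtain ⟨s, hs, rfl⟩ := hTEmem f hf
      rw [LinearMap.mem_ker]
      show ⁅s, X⁆ = 0
      exact hX' s (hTj s hs)
    · intro hX
      show ∀ Y ∈ j, ⁅Y, X⁆ = 0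
      intro Y hY
      have hle : j ≤ LinearMap.ker (rbr K X) := by
        rw [← hspanT, Submodule.span_le]
        intro s hs
        rw [SetLike.mem_coe, LinearMap.mem_ker]
        show ⁅s, X⁆ = 0
        have hfs := hX ((LieAlgebra.ad K L) s)
          (Finset.mem_image_of_mem _ ((hmemT s).mpr hs))
        rw [LinearMap.mem_ker] at hfs
        exact hfs
      have h3 := hle hY
      rw [LinearMap.mem_ker] at h3
      exact h3
  have hstabC : stab K g ≤ CC := by
    intro z hz
    rw [hCC, Submodule.mem_finsetInf]
    intro f hf
    obtain ⟨s, hs, rfl⟩ := hTEmem f hf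
    rw [LinearMap.mem_ker]
    show ⁅s, z⁆ = 0
    exact DV s (hTstab s hs) z hz
  have hIIinv : ∀ y' ∈ stab K g, ∀ u ∈ II, ⁅u, y'⁆ ∈ II := by
    intro y' hy' u hu
    have hle : II ≤ Submodule.comap (rbr K y') II := by
      rw [hII]
      refine Finset.sup_le fun f hf => ?_
      obtain ⟨s, hs, rfl⟩ := hTEmem f hf
      rintro u' ⟨w, -, rfl⟩
      rw [Submodule.mem_comap]
      show ⁅(LieAlgebra.ad K L) s w, y'⁆ ∈ II
      have hsw : (LieAlgebra.ad K L) s w = ⁅s, w⁆ := rfl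
      rw [hsw]
      have hssy : ⁅s, y'⁆ = 0 := DV s (hTstab s hs) y' hy'
      have hjac : ⁅⁅s, w⁆, y'⁆ = ⁅s, ⁅w, y'⁆⁆ := by
        rw [lie_lie, hssy, lie_zero, sub_zero]
      rw [hjac]
      have h4 : ⁅s, ⁅w, y'⁆⁆ ∈ (⊤ : Submodule K L).map ((LieAlgebra.ad K L) s) :=
        ⟨⁅w, y'⁆, trivial, rfl⟩
      have h45 : (⊤ : Submodule K L).map ((LieAlgebra.ad K L) s) ≤ II := by
        rw [hII]
        exact Finset.le_sup (f := fun f => (⊤ : Submodule K L).map f)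
          (Finset.mem_image_of_mem (fun s => ((LieAlgebra.ad K L) s : Module.End K L)) hs)
      exact h45 h4
    have h5 := hle hu
    rwa [Submodule.mem_comap] at h5
  have hsubC : brSpanFrom K ((centralizerSub K j : Set L)) g
      ≤ (centralizerSub K j).toSubmodule := by
    refine Submodule.span_le.mpr ?_
    rintro z ⟨a, ha, s, hs, rfl⟩
    have hsC : s ∈ centralizerSub K j := by
      have h6 := hstabC hs
      rw [← hC] at h6
      exact h6
    exact (centralizerSub K j).lie_mem ha hsC
  have hBrLe : brSpan K g ≤ brSpanFrom K ((centralizerSub K j : Set L)) g ⊔ II := by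
    refine Submodule.span_le.mpr ?_
    rintro z ⟨zz, -, s, hs, rfl⟩
    have hzz : zz ∈ CC ⊔ II := by rw [htop]; trivial
    obtain ⟨a, ha, u, hu, rfl⟩ := Submodule.mem_sup.mp hzz
    rw [add_lie]
    apply Submodule.add_mem
    · apply Submodule.mem_sup_left
      apply Submodule.subset_span
      refine ⟨a, ?_, s, hs, rfl⟩
      show a ∈ centralizerSub K j
      have h7 : a ∈ (centralizerSub K j).toSubmodule := by rw [hC]; exact ha
      exact h7
    · exact Submodule.mem_sup_right (hIIinv s hs u hu)
  have hF8 : stab K g ⊓ brSpan K g ≤ brSpanFrom K ((centralizerSub K j : Set L)) g := by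
    rintro z ⟨hzs, hzbr⟩
    obtain ⟨p, hp, u, hu, hpu⟩ := Submodule.mem_sup.mp (hBrLe hzbr)
    have hzC : z ∈ CC := hstabC hzs
    have hpC : p ∈ CC := by
      have := hsubC hp
      rwa [hC] at this
    have huC : u ∈ CC := by
      have h8 : u = z - p := by rw [← hpu, add_sub_cancel_left]
      rw [h8]
      exact Submodule.sub_mem _ hzC hpC
    have hu0 : u = 0 := by
      have h9 : u ∈ CC ⊓ II := ⟨huC, hu⟩
      rwa [hbot, Submodule.mem_bot] at h9
    rw [hu0, add_zero] at hpu
    rw [← hpu]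
    exact hp
  have hstabf : ∀ (z : L) (hzc : z ∈ centralizerSub K j), z ∈ stab K g →
      (⟨z, hzc⟩ : ↥(centralizerSub K j)) ∈ stab K
        ((g ∘ₗ (centralizerSub K j).toSubmodule.subtype :
          Module.Dual K ↥(centralizerSub K j))) := by
    intro z hzc hzs Y
    show g ((⁅(⟨z, hzc⟩ : ↥(centralizerSub K j)), Y⁆ : ↥(centralizerSub K j)) : L) = 0
    rw [LieSubalgebra.coe_bracket]
    exact hzs (Y : L)
  have hmapbr : brSpanFrom K ((centralizerSub K j : Set L)) g
      ≤ (brSpan K ((g ∘ₗ (centralizerSub K j).toSubmodule.subtype :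
          Module.Dual K ↥(centralizerSub K j)))).map
        (centralizerSub K j).toSubmodule.subtype := by
    refine Submodule.span_le.mpr ?_
    rintro z ⟨a, ha, s, hs, rfl⟩
    have haC : a ∈ centralizerSub K j := ha
    have hsC : s ∈ centralizerSub K j := by
      have h10 := hstabC hs
      rw [← hC] at h10
      exact h10
    have hbr : (⁅(⟨a, haC⟩ : ↥(centralizerSub K j)), ⟨s, hsC⟩⁆ : ↥(centralizerSub K j))
        ∈ brSpan K ((g ∘ₗ (centralizerSub K j).toSubmodule.subtype :
          Module.Dual K ↥(centralizerSub K j))) := by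
      apply Submodule.subset_span
      exact ⟨⟨a, haC⟩, trivial, ⟨s, hsC⟩, hstabf s hsC hs, rfl⟩
    refine ⟨_, hbr, ?_⟩
    rfl
  have hF7 : stab K g ⊓ brSpanFrom K ((centralizerSub K j : Set L)) g = ⊥ := by
    rw [eq_bot_iff]
    rintro z ⟨hzs, hzbr⟩
    obtain ⟨z', hz'br, hz'eq⟩ := hmapbr hzbr
    have hz'stab : z' ∈ stab K ((g ∘ₗ (centralizerSub K j).toSubmodule.subtype :
        Module.Dual K ↥(centralizerSub K j))) := by
      intro Y
      show g ⁅(z' : L), (Y : L)⁆ = 0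
      have h11 : (z' : L) = z := hz'eq
      rw [h11]
      exact hzs (Y : L)
    have h12 : z' ∈ brSpan K ((g ∘ₗ (centralizerSub K j).toSubmodule.subtype :
        Module.Dual K ↥(centralizerSub K j))) ⊓ stab K _ := ⟨hz'br, hz'stab⟩
    have hbotf : brSpan K ((g ∘ₗ (centralizerSub K j).toSubmodule.subtype :
        Module.Dual K ↥(centralizerSub K j))) ⊓ stab K _ = ⊥ := hstab
    rw [hbotf, Submodule.mem_bot] at h12
    rw [Submodule.mem_bot, ← hz'eq, h12]
    simp
  have hP1 : stab K g ⊓ brSpan K g = ⊥ := by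
    rw [eq_bot_iff]
    intro z hz
    have h13 : z ∈ stab K g ⊓ brSpanFrom K ((centralizerSub K j : Set L)) g :=
      ⟨hz.1, hF8 hz⟩
    rw [hF7] at h13
    exact h13
  refine ⟨?_, ?_⟩
  · rw [hP1, hF7]
  · show brSpan K g ⊓ stab K g = ⊥
    rw [inf_comm]
    exact hP1



end Stmt5
end Paper
end

section
/- Let V be a vector space of even dimension 2p (p ≥ 2) over K with symplectic form ξ = Σ_{j=1}^{p} e*_{2j-1} ∧ e*_{2j}, and let 𝒱 be the flag with V_j = span(e₁,...,e_{2j-1}) for 1 ≤ j ≤ p and V_{p+1} = V. Let 𝔤 = 𝔯_𝒱 = 𝔩 ⊕ 𝔫, where 𝔩 = ⊕_{j=1}^{p} K·H_j with H_j = E_{2j-1,2j-1} − E_{2j,2j}, and 𝔫 = ⊕_{j=1}^{p} K·Z_j ⊕ ⊕_{j=1}^{p-1} K·T_j with Z_j = 2E_{2j-1,2j}, T_j = E_{2j-1,2j+2} + E_{2j+1,2j}. Let g ∈ 𝔤* vanish on 𝔩 with ζ_j = g(Z_j), τ_j = g(T_j) and Π_j ζ_j ≠ 0. Then the coadjoint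 stabilizer is 𝔤(g) = ⊕_{i=1}^{p-1} K·W_i where W_i = T_i − (τ_i/2)(Z_i/ζ_i + Z_{i+1}/ζ_{i+1}). -/
open Module LinearMap

namespace Paper

variable (K : Type*) [Field K] [IsAlgClosed K] [CharZero K]

/-- Elementary matrix `E_{a,b}` (with `ℕ` indices; zero if out of range). -/
def Eij (N a b : ℕ) : Matrix (Fin N) (Fin N) K :=
  Matrix.of fun i k => if (i : ℕ) = a ∧ (k : ℕ) = b then 1 else 0

variable (p : ℕ)

/-- `H_j = E_{2j-1,2j-1} − E_{2j,2j}` (0-indexed). -/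
def Hgen (N j : ℕ) : Matrix (Fin N) (Fin N) K :=
  Eij K N (2 * j) (2 * j) - Eij K N (2 * j + 1) (2 * j + 1)

/-- `Z_j = 2E_{2j-1,2j}` (0-indexed). -/
def Zgen (N j : ℕ) : Matrix (Fin N) (Fin N) K :=
  (2 : K) • Eij K N (2 * j) (2 * j + 1)

/-- `T_j = E_{2j-1,2j+2} + E_{2j+1,2j}` (0-indexed). -/
def Tgen (N j : ℕ) : Matrix (Fin N) (Fin N) K :=
  Eij K N (2 * j) (2 * j + 3) + Eij K N (2 * j + 2) (2 * j + 1)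

/-- The Lie algebra `𝔤 = 𝔯_𝒱 = 𝔩 ⊕ 𝔫`, spanned by the `H_j, Z_j (j < p)` and the
`T_j (j < p−1)`, inside `𝔤𝔩(2p, K)`. -/
def rEven : Submodule K (Matrix (Fin (2 * p)) (Fin (2 * p)) K) :=
  Submodule.span K
    ({M | ∃ j < p, M = Hgen K (2 * p) j} ∪ {M | ∃ j < p, M = Zgen K (2 * p) j} ∪
      {M | ∃ j < p - 1, M = Tgen K (2 * p) j})

/-- `W_i = T_i − (τ_i/2)(Z_i/ζ_i + Z_{i+1}/ζ_{i+1})`. -/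
def Wgen (N : ℕ) (ζ τ : ℕ → K) (i : ℕ) : Matrix (Fin N) (Fin N) K :=
  Tgen K N i - (τ i / (2 * ζ i)) • Zgen K N i - (τ i / (2 * ζ (i + 1))) • Zgen K N (i + 1)

/-! ### Auxiliary lemmas -/

section Aux

set_option linter.unusedSectionVars false

attribute [local instance 100] LieRing.ofAssociativeRing
attribute [local instance 100] LieAlgebra.ofAssociativeAlgebra

lemma Eij_apply (N a b : ℕ) (i k : Fin N) :
    Eij K N a b i k = if (i:ℕ) = a ∧ (k:ℕ) = b then 1 else 0 := rfl

lemma Eij_mul (N a b c d : ℕ) :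
    Eij K N a b * Eij K N c d = if b = c ∧ b < N then Eij K N a d else 0 := by
  by_cases hbc : b = c ∧ b < N
  · obtain ⟨rfl, hb⟩ := hbc
    rw [if_pos ⟨rfl, hb⟩]
    ext i k
    rw [Matrix.mul_apply, Finset.sum_eq_single (⟨b, hb⟩ : Fin N)]
    · simp only [Eij_apply]
      split_ifs <;> first | ring1 | tauto | omega
    · intro m _ hm
      simp only [Eij_apply]
      have : (m:ℕ) ≠ b := fun h => hm (Fin.ext h)
      split_ifs <;> first | ring1 | tauto | omega
    · intro h; exact absurd (Finset.mem_univ _) h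
  · rw [if_neg hbc]
    ext i k
    rw [Matrix.mul_apply]
    apply Finset.sum_eq_zero
    intro m _
    have := m.isLt
    push_neg at hbc
    simp only [Eij_apply]
    split_ifs <;> first | ring1 | tauto | omega

lemma lie_H_H (j l : ℕ) : ⁅Hgen K (2*p) j, Hgen K (2*p) l⁆ = 0 := by
  rcases eq_or_ne j l with rfl | hne <;>
  · simp only [Ring.lie_def, Hgen, sub_mul, mul_sub, Eij_mul]
    split_ifs <;> first | omega | module

lemma lie_Z_Z (j l : ℕ) : ⁅Zgen K (2*p) j, Zgen K (2*p) l⁆ = 0 := by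
  simp only [Ring.lie_def, Zgen, smul_mul_assoc, mul_smul_comm, Eij_mul]
  split_ifs <;> first | omega | module

lemma lie_Z_T (j l : ℕ) : ⁅Zgen K (2*p) j, Tgen K (2*p) l⁆ = 0 := by
  simp only [Ring.lie_def, Zgen, Tgen, smul_mul_assoc, mul_smul_comm, add_mul,
    mul_add, Eij_mul, true_and, and_true, true_or, or_true, if_true, if_false]
  split_ifs <;> first | omega | module

lemma lie_T_T (j l : ℕ) : ⁅Tgen K (2*p) j, Tgen K (2*p) l⁆ = 0 := by
  simp only [Ring.lie_def, Tgen, add_mul, mul_add, Eij_mul, true_and, and_true,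
    true_or, or_true, if_true, if_false]
  split_ifs <;> first | omega | module

lemma lie_H_Z {j l : ℕ} (hj : j < p) (hl : l < p) :
    ⁅Hgen K (2*p) j, Zgen K (2*p) l⁆ = if j = l then (2:K) • Zgen K (2*p) l else 0 := by
  simp only [Ring.lie_def, Hgen, Zgen, sub_mul, mul_sub, smul_mul_assoc, mul_smul_comm,
    Eij_mul]
  rcases eq_or_ne j l with rfl | hne <;> split_ifs <;> first | omega | module

set_option maxHeartbeats 2000000 in
lemma lie_H_T {j l : ℕ} (hj : j < p) (hl : l < p - 1) :
    ⁅Hgen K (2*p) j, Tgen K (2*p) l⁆ = if j = l ∨ j = l + 1 then Tgen K (2*p) l else 0 := by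
  rcases eq_or_ne j l with rfl | h1
  · simp only [Ring.lie_def, Hgen, Tgen, sub_mul, mul_sub, add_mul, mul_add, Eij_mul,
      true_and, and_true, true_or, or_true, if_true, if_false]
    split_ifs <;> first | omega | module
  rcases eq_or_ne j (l+1) with rfl | h2 <;>
  · simp only [Ring.lie_def, Hgen, Tgen, sub_mul, mul_sub, add_mul, mul_add, Eij_mul,
      true_and, and_true, true_or, or_true, if_true, if_false]
    split_ifs <;> first | omega | module

lemma sum_lie' (s : Finset ℕ) (f : ℕ → Matrix (Fin (2*p)) (Fin (2*p)) K)
    (Y : Matrix (Fin (2*p)) (Fin (2*p)) K) :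
    ⁅∑ j ∈ s, f j, Y⁆ = ∑ j ∈ s, ⁅f j, Y⁆ := by
  simp only [Ring.lie_def, Finset.sum_mul, Finset.mul_sum, Finset.sum_sub_distrib]

lemma H_mem {j : ℕ} (hj : j < p) : Hgen K (2*p) j ∈ rEven K p :=
  Submodule.subset_span (Or.inl (Or.inl ⟨j, hj, rfl⟩))

lemma Z_mem {j : ℕ} (hj : j < p) : Zgen K (2*p) j ∈ rEven K p :=
  Submodule.subset_span (Or.inl (Or.inr ⟨j, hj, rfl⟩))

lemma T_mem {j : ℕ} (hj : j < p - 1) : Tgen K (2*p) j ∈ rEven K p :=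
  Submodule.subset_span (Or.inr ⟨j, hj, rfl⟩)

lemma W_mem (ζ τ : ℕ → K) {i : ℕ} (hi : i < p - 1) :
    Wgen K (2*p) ζ τ i ∈ rEven K p := by
  apply sub_mem (sub_mem (T_mem K p hi) (Submodule.smul_mem _ _ (Z_mem K p (by omega))))
    (Submodule.smul_mem _ _ (Z_mem K p (by omega)))

/-- index into `Fin (2*p)` -/
def fidx (hp : 0 < p) (m : ℕ) : Fin (2*p) := ⟨m % (2*p), Nat.mod_lt _ (by omega)⟩

lemma fidx_val (hp : 0 < p) {m : ℕ} (hm : m < 2*p) : ((fidx p hp m : Fin (2*p)) : ℕ) = m :=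
  Nat.mod_eq_of_lt hm

def coeffH (hp : 0 < p) (X : Matrix (Fin (2*p)) (Fin (2*p)) K) (j : ℕ) : K :=
  X (fidx p hp (2*j)) (fidx p hp (2*j))

def coeffZ (hp : 0 < p) (X : Matrix (Fin (2*p)) (Fin (2*p)) K) (j : ℕ) : K :=
  X (fidx p hp (2*j)) (fidx p hp (2*j+1)) / 2

def coeffT (hp : 0 < p) (X : Matrix (Fin (2*p)) (Fin (2*p)) K) (j : ℕ) : K :=
  X (fidx p hp (2*j)) (fidx p hp (2*j+3))

lemma coeffH_H (hp : 0 < p) {j : ℕ} (hj : j < p) (l : ℕ) :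
    coeffH K p hp (Hgen K (2*p) l) j = if j = l then 1 else 0 := by
  have e1 : ((fidx p hp (2*j) : Fin (2*p)) : ℕ) = 2*j := fidx_val p hp (by omega)
  simp only [coeffH, Hgen, Matrix.sub_apply, Eij_apply, e1]
  split_ifs <;> first | omega | norm_num

lemma coeffZ_H (hp : 0 < p) {j : ℕ} (hj : j < p) (l : ℕ) :
    coeffZ K p hp (Hgen K (2*p) l) j = 0 := by
  have e1 : ((fidx p hp (2*j) : Fin (2*p)) : ℕ) = 2*j := fidx_val p hp (by omega)
  have e2 : ((fidx p hp (2*j+1) : Fin (2*p)) : ℕ) = 2*j+1 := fidx_val p hp (by omega)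
  simp only [coeffZ, Hgen, Matrix.sub_apply, Eij_apply, e1, e2]
  split_ifs <;> first | omega | norm_num

lemma coeffT_H (hp : 0 < p) {j : ℕ} (hj : j < p - 1) (l : ℕ) :
    coeffT K p hp (Hgen K (2*p) l) j = 0 := by
  have e1 : ((fidx p hp (2*j) : Fin (2*p)) : ℕ) = 2*j := fidx_val p hp (by omega)
  have e2 : ((fidx p hp (2*j+3) : Fin (2*p)) : ℕ) = 2*j+3 := fidx_val p hp (by omega)
  simp only [coeffT, Hgen, Matrix.sub_apply, Eij_apply, e1, e2]
  split_ifs <;> first | omega | norm_num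

lemma coeffH_Z (hp : 0 < p) {j : ℕ} (hj : j < p) (l : ℕ) :
    coeffH K p hp (Zgen K (2*p) l) j = 0 := by
  have e1 : ((fidx p hp (2*j) : Fin (2*p)) : ℕ) = 2*j := fidx_val p hp (by omega)
  simp only [coeffH, Zgen, Matrix.smul_apply, Eij_apply, e1, smul_eq_mul]
  split_ifs <;> first | omega | norm_num

lemma coeffZ_Z (hp : 0 < p) {j : ℕ} (hj : j < p) (l : ℕ) :
    coeffZ K p hp (Zgen K (2*p) l) j = if j = l then 1 else 0 := by
  have e1 : ((fidx p hp (2*j) : Fin (2*p)) : ℕ) = 2*j := fidx_val p hp (by omega)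
  have e2 : ((fidx p hp (2*j+1) : Fin (2*p)) : ℕ) = 2*j+1 := fidx_val p hp (by omega)
  simp only [coeffZ, Zgen, Matrix.smul_apply, Eij_apply, e1, e2, smul_eq_mul]
  split_ifs <;> first | omega | norm_num

lemma coeffT_Z (hp : 0 < p) {j : ℕ} (hj : j < p - 1) (l : ℕ) :
    coeffT K p hp (Zgen K (2*p) l) j = 0 := by
  have e1 : ((fidx p hp (2*j) : Fin (2*p)) : ℕ) = 2*j := fidx_val p hp (by omega)
  have e2 : ((fidx p hp (2*j+3) : Fin (2*p)) : ℕ) = 2*j+3 := fidx_val p hp (by omega)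
  simp only [coeffT, Zgen, Matrix.smul_apply, Eij_apply, e1, e2, smul_eq_mul]
  split_ifs <;> first | omega | norm_num

lemma coeffH_T (hp : 0 < p) {j : ℕ} (hj : j < p) (l : ℕ) :
    coeffH K p hp (Tgen K (2*p) l) j = 0 := by
  have e1 : ((fidx p hp (2*j) : Fin (2*p)) : ℕ) = 2*j := fidx_val p hp (by omega)
  simp only [coeffH, Tgen, Matrix.add_apply, Eij_apply, e1]
  split_ifs <;> first | omega | norm_num

lemma coeffZ_T (hp : 0 < p) {j : ℕ} (hj : j < p) (l : ℕ) :
    coeffZ K p hp (Tgen K (2*p) l) j = 0 := by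
  have e1 : ((fidx p hp (2*j) : Fin (2*p)) : ℕ) = 2*j := fidx_val p hp (by omega)
  have e2 : ((fidx p hp (2*j+1) : Fin (2*p)) : ℕ) = 2*j+1 := fidx_val p hp (by omega)
  simp only [coeffZ, Tgen, Matrix.add_apply, Eij_apply, e1, e2]
  split_ifs <;> first | omega | norm_num

lemma coeffT_T (hp : 0 < p) {j : ℕ} (hj : j < p - 1) (l : ℕ) :
    coeffT K p hp (Tgen K (2*p) l) j = if j = l then 1 else 0 := by
  have e1 : ((fidx p hp (2*j) : Fin (2*p)) : ℕ) = 2*j := fidx_val p hp (by omega)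
  have e2 : ((fidx p hp (2*j+3) : Fin (2*p)) : ℕ) = 2*j+3 := fidx_val p hp (by omega)
  simp only [coeffT, Tgen, Matrix.add_apply, Eij_apply, e1, e2]
  split_ifs <;> first | omega | norm_num

lemma coeffT_W (hp : 0 < p) (ζ τ : ℕ → K) {j : ℕ} (hj : j < p - 1) (i : ℕ) :
    coeffT K p hp (Wgen K (2*p) ζ τ i) j = if j = i then 1 else 0 := by
  have h1 : coeffT K p hp (Tgen K (2*p) i) j = if j = i then 1 else 0 := coeffT_T K p hp hj i
  have h2 : coeffT K p hp (Zgen K (2*p) i) j = 0 := coeffT_Z K p hp hj i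
  have h3 : coeffT K p hp (Zgen K (2*p) (i+1)) j = 0 := coeffT_Z K p hp hj (i+1)
  simp only [coeffT, Wgen, Matrix.sub_apply, Matrix.smul_apply, smul_eq_mul] at *
  rw [h2, h3, mul_zero, mul_zero, sub_zero, sub_zero, h1]

/-- Every element of `rEven` is determined by its coefficient entries. -/
lemma decomp (hp : 0 < p) (X : Matrix (Fin (2*p)) (Fin (2*p)) K) (hX : X ∈ rEven K p) :
    X = ∑ j ∈ Finset.range p, coeffH K p hp X j • Hgen K (2*p) j
      + ∑ j ∈ Finset.range p, coeffZ K p hp X j • Zgen K (2*p) j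
      + ∑ j ∈ Finset.range (p-1), coeffT K p hp X j • Tgen K (2*p) j := by
  induction hX using Submodule.span_induction with
  | mem x h =>
    rcases h with (⟨l, hl, rfl⟩ | ⟨l, hl, rfl⟩) | ⟨l, hl, rfl⟩
    · have h1 : ∑ j ∈ Finset.range p, coeffH K p hp (Hgen K (2*p) l) j • Hgen K (2*p) j
          = Hgen K (2*p) l := by
        rw [Finset.sum_eq_single l]
        · rw [coeffH_H K p hp hl l, if_pos rfl, one_smul]
        · intro j hjr hne
          rw [coeffH_H K p hp (Finset.mem_range.mp hjr) l, if_neg hne, zero_smul]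
        · intro hnot; exact absurd (Finset.mem_range.mpr hl) hnot
      have h2 : ∑ j ∈ Finset.range p, coeffZ K p hp (Hgen K (2*p) l) j • Zgen K (2*p) j = 0 :=
        Finset.sum_eq_zero (fun j hj => by
          rw [coeffZ_H K p hp (Finset.mem_range.mp hj) l, zero_smul])
      have h3 : ∑ j ∈ Finset.range (p-1), coeffT K p hp (Hgen K (2*p) l) j • Tgen K (2*p) j = 0 :=
        Finset.sum_eq_zero (fun j hj => by
          rw [coeffT_H K p hp (Finset.mem_range.mp hj) l, zero_smul])
      rw [h1, h2, h3, add_zero, add_zero]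
    · have h1 : ∑ j ∈ Finset.range p, coeffZ K p hp (Zgen K (2*p) l) j • Zgen K (2*p) j
          = Zgen K (2*p) l := by
        rw [Finset.sum_eq_single l]
        · rw [coeffZ_Z K p hp hl l, if_pos rfl, one_smul]
        · intro j hjr hne
          rw [coeffZ_Z K p hp (Finset.mem_range.mp hjr) l, if_neg hne, zero_smul]
        · intro hnot; exact absurd (Finset.mem_range.mpr hl) hnot
      have h2 : ∑ j ∈ Finset.range p, coeffH K p hp (Zgen K (2*p) l) j • Hgen K (2*p) j = 0 :=
        Finset.sum_eq_zero (fun j hj => by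
          rw [coeffH_Z K p hp (Finset.mem_range.mp hj) l, zero_smul])
      have h3 : ∑ j ∈ Finset.range (p-1), coeffT K p hp (Zgen K (2*p) l) j • Tgen K (2*p) j = 0 :=
        Finset.sum_eq_zero (fun j hj => by
          rw [coeffT_Z K p hp (Finset.mem_range.mp hj) l, zero_smul])
      rw [h1, h2, h3, zero_add, add_zero]
    · have h1 : ∑ j ∈ Finset.range (p-1), coeffT K p hp (Tgen K (2*p) l) j • Tgen K (2*p) j
          = Tgen K (2*p) l := by
        rw [Finset.sum_eq_single l]
        · rw [coeffT_T K p hp hl l, if_pos rfl, one_smul]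
        · intro j hjr hne
          rw [coeffT_T K p hp (Finset.mem_range.mp hjr) l, if_neg hne, zero_smul]
        · intro hnot; exact absurd (Finset.mem_range.mpr hl) hnot
      have h2 : ∑ j ∈ Finset.range p, coeffH K p hp (Tgen K (2*p) l) j • Hgen K (2*p) j = 0 :=
        Finset.sum_eq_zero (fun j hj => by
          rw [coeffH_T K p hp (Finset.mem_range.mp hj) l, zero_smul])
      have h3 : ∑ j ∈ Finset.range p, coeffZ K p hp (Tgen K (2*p) l) j • Zgen K (2*p) j = 0 :=
        Finset.sum_eq_zero (fun j hj => by
          rw [coeffZ_T K p hp (Finset.mem_range.mp hj) l, zero_smul])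
      rw [h1, h2, h3, zero_add, zero_add]
  | zero => simp [coeffH, coeffZ, coeffT]
  | add x y hx hy ihx ihy =>
    calc x + y
        = (∑ j ∈ Finset.range p, coeffH K p hp x j • Hgen K (2*p) j
          + ∑ j ∈ Finset.range p, coeffZ K p hp x j • Zgen K (2*p) j
          + ∑ j ∈ Finset.range (p-1), coeffT K p hp x j • Tgen K (2*p) j)
          + (∑ j ∈ Finset.range p, coeffH K p hp y j • Hgen K (2*p) j
          + ∑ j ∈ Finset.range p, coeffZ K p hp y j • Zgen K (2*p) j
          + ∑ j ∈ Finset.range (p-1), coeffT K p hp y j • Tgen K (2*p) j) := by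
          rw [← ihx, ← ihy]
      _ = _ := by
          simp only [coeffH, coeffZ, coeffT, Matrix.add_apply, add_smul, add_div,
            Finset.sum_add_distrib]
          abel
  | smul a x hx ih =>
    calc a • x
        = a • (∑ j ∈ Finset.range p, coeffH K p hp x j • Hgen K (2*p) j
          + ∑ j ∈ Finset.range p, coeffZ K p hp x j • Zgen K (2*p) j
          + ∑ j ∈ Finset.range (p-1), coeffT K p hp x j • Tgen K (2*p) j) := by rw [← ih]
      _ = _ := by
          simp only [coeffH, coeffZ, coeffT, Matrix.smul_apply, smul_add, Finset.smul_sum,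
            smul_smul, smul_eq_mul, mul_div_assoc]

/-- `g ⁅W_i, Y⁆ = 0` for all `Y ∈ rEven`. -/
lemma gW (hp : 2 ≤ p) (g : Module.Dual K (Matrix (Fin (2*p)) (Fin (2*p)) K)) (ζ τ : ℕ → K)
    (hZ : ∀ j < p, g (Zgen K (2*p) j) = ζ j) (hζ : ∀ j < p, ζ j ≠ 0)
    (hT : ∀ j < p - 1, g (Tgen K (2*p) j) = τ j)
    {i : ℕ} (hi : i < p - 1) :
    ∀ Y ∈ rEven K p, g ⁅Wgen K (2*p) ζ τ i, Y⁆ = 0 := by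
  intro Y hY
  have hi' : i < p := by omega
  have hi1 : i + 1 < p := by omega
  unfold rEven at hY
  induction hY using Submodule.span_induction with
  | mem Y h =>
    rcases h with (⟨j, hj, rfl⟩ | ⟨j, hj, rfl⟩) | ⟨j, hj, rfl⟩
    · rw [Wgen, sub_lie, sub_lie, smul_lie, smul_lie,
        ← lie_skew (Tgen K (2*p) i) (Hgen K (2*p) j),
        ← lie_skew (Zgen K (2*p) i) (Hgen K (2*p) j),
        ← lie_skew (Zgen K (2*p) (i+1)) (Hgen K (2*p) j),
        lie_H_T K p hj hi, lie_H_Z K p hj hi', lie_H_Z K p hj hi1]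
      rcases eq_or_ne j i with h1 | h1
      · rw [if_pos (Or.inl h1), if_pos h1, if_neg (by omega)]
        simp only [map_sub, map_neg, map_smul, map_zero, smul_eq_mul, neg_zero,
          smul_zero, mul_zero, sub_zero, mul_neg, neg_neg, hT i hi, hZ i hi']
        rw [div_mul_cancel₀ _ (mul_ne_zero two_ne_zero (hζ i hi')),
          sub_neg_eq_add, neg_add_cancel]
      rcases eq_or_ne j (i+1) with h2 | h2
      · rw [if_pos (Or.inr h2), if_neg (by omega), if_pos h2]
        simp only [map_sub, map_neg, map_smul, map_zero, smul_eq_mul, neg_zero,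
          smul_zero, mul_zero, sub_zero, zero_sub, mul_neg, neg_neg, hT i hi,
          hZ (i+1) hi1]
        rw [div_mul_cancel₀ _ (mul_ne_zero two_ne_zero (hζ (i+1) hi1)),
          sub_neg_eq_add, neg_add_cancel]
      · rw [if_neg (by tauto), if_neg h1, if_neg h2]
        simp
    · rw [Wgen, sub_lie, sub_lie, smul_lie, smul_lie,
        ← lie_skew (Tgen K (2*p) i) (Zgen K (2*p) j),
        lie_Z_T, lie_Z_Z, lie_Z_Z]
      simp
    · rw [Wgen, sub_lie, sub_lie, smul_lie, smul_lie, lie_T_T, lie_Z_T, lie_Z_T]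
      simp
  | zero => simp
  | add x y hx hy ihx ihy => rw [lie_add, map_add, ihx, ihy, add_zero]
  | smul a x hx ih => rw [lie_smul, map_smul, ih, smul_zero]

/-- If all `T`-coefficients of a stabilizer element vanish, the element is `0`. -/
lemma stab_zero (hp : 2 ≤ p) (hp0 : 0 < p)
    (g : Module.Dual K (Matrix (Fin (2*p)) (Fin (2*p)) K))
    (ζ : ℕ → K) (hZ : ∀ j < p, g (Zgen K (2*p) j) = ζ j) (hζ : ∀ j < p, ζ j ≠ 0)
    (X : Matrix (Fin (2*p)) (Fin (2*p)) K) (hX : X ∈ rEven K p)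
    (hbr : ∀ Y ∈ rEven K p, g ⁅X, Y⁆ = 0)
    (hc : ∀ j ∈ Finset.range (p-1), coeffT K p hp0 X j = 0) : X = 0 := by
  have hdec := decomp K p hp0 X hX
  have hc3 : ∑ j ∈ Finset.range (p-1), coeffT K p hp0 X j • Tgen K (2*p) j = 0 :=
    Finset.sum_eq_zero (fun j hj => by rw [hc j hj, zero_smul])
  rw [hc3, add_zero] at hdec
  set a : ℕ → K := coeffH K p hp0 X with ha
  set b : ℕ → K := coeffZ K p hp0 X with hb
  have hA : ∀ l ∈ Finset.range p, a l = 0 := by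
    intro l hl0
    have hl := Finset.mem_range.mp hl0
    have h0 := hbr (Zgen K (2*p) l) (Z_mem K p hl)
    rw [hdec, add_lie, sum_lie', sum_lie', map_add, map_sum, map_sum,
      Finset.sum_congr rfl (fun j hj => show g ⁅a j • Hgen K (2*p) j, Zgen K (2*p) l⁆
          = if j = l then a j * (2 * ζ l) else 0 by
        rw [smul_lie, map_smul, lie_H_Z K p (Finset.mem_range.mp hj) hl]
        split_ifs with h
        · rw [map_smul, hZ l hl, smul_eq_mul, smul_eq_mul]
        · rw [map_zero, smul_zero]),
      Finset.sum_congr rfl (fun j hj => show g ⁅b j • Zgen K (2*p) j, Zgen K (2*p) l⁆ = 0 by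
        rw [smul_lie, lie_Z_Z, smul_zero, map_zero]),
      Finset.sum_ite_eq' (Finset.range p) l, if_pos hl0, Finset.sum_const_zero,
      add_zero] at h0
    exact (mul_eq_zero.mp h0).resolve_right (mul_ne_zero two_ne_zero (hζ l hl))
  have hB : ∀ l ∈ Finset.range p, b l = 0 := by
    intro l hl0
    have hl := Finset.mem_range.mp hl0
    have h0 := hbr (Hgen K (2*p) l) (H_mem K p hl)
    rw [hdec, add_lie, sum_lie', sum_lie', map_add, map_sum, map_sum,
      Finset.sum_eq_zero (fun j hj => show g ⁅a j • Hgen K (2*p) j, Hgen K (2*p) l⁆ = 0 by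
        rw [smul_lie, lie_H_H, smul_zero, map_zero]),
      Finset.sum_congr rfl (fun j hj => show g ⁅b j • Zgen K (2*p) j, Hgen K (2*p) l⁆
          = if l = j then -(b j * (2 * ζ j)) else 0 by
        rw [smul_lie, map_smul, ← lie_skew (Zgen K (2*p) j) (Hgen K (2*p) l),
          lie_H_Z K p hl (Finset.mem_range.mp hj)]
        split_ifs with h
        · rw [map_neg, map_smul, hZ j (Finset.mem_range.mp hj), smul_eq_mul, smul_eq_mul]
          ring
        · rw [neg_zero, map_zero, smul_zero]),
      Finset.sum_ite_eq (Finset.range p) l, if_pos hl0, zero_add] at h0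
    have := neg_eq_zero.mp h0
    exact (mul_eq_zero.mp this).resolve_right (mul_ne_zero two_ne_zero (hζ l hl))
  rw [hdec, Finset.sum_eq_zero (fun j hj => by rw [hA j hj, zero_smul]),
    Finset.sum_eq_zero (fun j hj => by rw [hB j hj, zero_smul]), add_zero]

end Aux

lemma mat_smul_lie (a : K) (x y : Matrix (Fin (2*p)) (Fin (2*p)) K) :
    ⁅a • x, y⁆ = a • ⁅x, y⁆ := by
  simp only [Ring.lie_def, smul_mul_assoc, mul_smul_comm, smul_sub]

lemma mat_sub_lie (x y z : Matrix (Fin (2*p)) (Fin (2*p)) K) :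
    ⁅x - y, z⁆ = ⁅x, z⁆ - ⁅y, z⁆ := by
  simp only [Ring.lie_def, sub_mul, mul_sub]; abel

lemma mat_add_lie (x y z : Matrix (Fin (2*p)) (Fin (2*p)) K) :
    ⁅x + y, z⁆ = ⁅x, z⁆ + ⁅y, z⁆ := by
  simp only [Ring.lie_def, add_mul, mul_add]; abel

/-- for `g` vanishing on `𝔩` with all `ζ_j = g(Z_j) ≠ 0`, the coadjoint
stabilizer `𝔤(g)` is spanned by the `W_i`, `1 ≤ i ≤ p−1`. -/
theorem stab_even_case (hp : 2 ≤ p)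
    (g : Module.Dual K (Matrix (Fin (2 * p)) (Fin (2 * p)) K)) (ζ τ : ℕ → K)
    (hH : ∀ j < p, g (Hgen K (2 * p) j) = 0)
    (hZ : ∀ j < p, g (Zgen K (2 * p) j) = ζ j) (hζ : ∀ j < p, ζ j ≠ 0)
    (hT : ∀ j < p - 1, g (Tgen K (2 * p) j) = τ j) :
    ∀ X : Matrix (Fin (2 * p)) (Fin (2 * p)) K,
      (X ∈ rEven K p ∧ ∀ Y ∈ rEven K p, g ⁅X, Y⁆ = 0) ↔
        X ∈ Submodule.span K {M | ∃ i < p - 1, M = Wgen K (2 * p) ζ τ i} := by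
  have hp0 : 0 < p := by omega
  intro X
  constructor
  · rintro ⟨hX, hbr⟩
    set c : ℕ → K := coeffT K p hp0 X with hcdef
    set S : Matrix (Fin (2*p)) (Fin (2*p)) K :=
      ∑ i ∈ Finset.range (p-1), c i • Wgen K (2*p) ζ τ i with hSdef
    have hSspan : S ∈ Submodule.span K {M | ∃ i < p - 1, M = Wgen K (2 * p) ζ τ i} :=
      Submodule.sum_mem _ (fun i hi => Submodule.smul_mem _ _
        (Submodule.subset_span ⟨i, Finset.mem_range.mp hi, rfl⟩))
    have hSre : S ∈ rEven K p :=
      Submodule.sum_mem _ (fun i hi => Submodule.smul_mem _ _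
        (W_mem K p ζ τ (Finset.mem_range.mp hi)))
    have hSbr : ∀ Y ∈ rEven K p, g ⁅S, Y⁆ = 0 := by
      intro Y hY
      rw [hSdef, sum_lie', map_sum]
      apply Finset.sum_eq_zero
      intro i hi
      rw [mat_smul_lie, map_smul, gW K p hp g ζ τ hZ hζ hT (Finset.mem_range.mp hi) Y hY,
        smul_zero]
    have hzero : X - S = 0 := by
      apply stab_zero K p hp hp0 g ζ hZ hζ (X - S) (sub_mem hX hSre)
      · intro Y hY
        rw [mat_sub_lie, map_sub, hbr Y hY, hSbr Y hY, sub_zero]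
      · intro j hj
        have hj' := Finset.mem_range.mp hj
        have hSentry : coeffT K p hp0 S j = c j := by
          rw [hSdef]
          simp only [coeffT, Matrix.sum_apply, Matrix.smul_apply, smul_eq_mul]
          rw [Finset.sum_congr rfl (fun i hi => by
            rw [show (Wgen K (2*p) ζ τ i) (fidx p hp0 (2*j)) (fidx p hp0 (2*j+3))
                = coeffT K p hp0 (Wgen K (2*p) ζ τ i) j from rfl,
              coeffT_W K p hp0 ζ τ hj' i, mul_ite, mul_one, mul_zero]),
            Finset.sum_ite_eq (Finset.range (p-1)) j, if_pos hj]
        show coeffT K p hp0 (X - S) j = 0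
        have : coeffT K p hp0 (X - S) j = coeffT K p hp0 X j - coeffT K p hp0 S j := by
          simp [coeffT, Matrix.sub_apply]
        rw [this, hSentry, hcdef, sub_self]
    have hXS : X = S := by rwa [sub_eq_zero] at hzero
    rw [hXS]; exact hSspan
  · intro hXW
    constructor
    · exact Submodule.span_le.mpr
        (by rintro M ⟨i, hi, rfl⟩; exact W_mem K p ζ τ hi) hXW
    · induction hXW using Submodule.span_induction with
      | mem x h =>
        obtain ⟨i, hi, rfl⟩ := h
        exact gW K p hp g ζ τ hZ hζ hT hi
      | zero => intro Y hY; simp [Ring.lie_def]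
      | add x y hx hy ihx ihy =>
        intro Y hY
        rw [mat_add_lie, map_add, ihx Y hY, ihy Y hY, add_zero]
      | smul a x hx ih =>
        intro Y hY
        rw [mat_smul_lie, map_smul, ih Y hY, smul_zero]

end Paper
end
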